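/- arXiv:2005.01037 — 4 statements merged into one kernel-verified Lean document; each statement's English description precedes it below -/
import Mathlib

section
/- If G is a connected simple graph on n vertices with m edges and 0 ≤ α ≤ 1, then E^{A_α}(G) ≤ √(n · Σ_{i=1}^n (ρ_i − 2αm/n)²); equivalently, E^{A_α}(G) ≤ √(2S(G)·n) where 2S(G) = α²·Zg(G) + 2m(1−α)² − 4α²m²/n. -/
open Matrix Finset

noncomputable def alphaMatrix {n : ℕ} (G : SimpleGraph (Fin n)) [DecidableRel G.Adj] (α : ℝ) :
    Matrix (Fin n) (Fin n) ℝ :=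
  α • Matrix.diagonal (fun v => (G.degree v : ℝ)) + (1 - α) • (G.adjMatrix ℝ)

lemma adjMatrix_isHermitian {n : ℕ} (G : SimpleGraph (Fin n)) [DecidableRel G.Adj] :
    (G.adjMatrix ℝ).IsHermitian := by
  rw [Matrix.IsHermitian, conjTranspose_eq_transpose_of_trivial]
  exact (G.isSymm_adjMatrix (α := ℝ))

lemma alphaMatrix_isHermitian {n : ℕ} (G : SimpleGraph (Fin n)) [DecidableRel G.Adj] (α : ℝ) :
    (alphaMatrix G α).IsHermitian := by
  rw [Matrix.IsHermitian, conjTranspose_eq_transpose_of_trivial]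
  unfold alphaMatrix
  rw [Matrix.transpose_add, Matrix.transpose_smul, Matrix.transpose_smul,
    Matrix.diagonal_transpose, (G.isSymm_adjMatrix (α := ℝ))]

noncomputable def zagreb {n : ℕ} (G : SimpleGraph (Fin n)) [DecidableRel G.Adj] : ℝ :=
  ∑ v, (G.degree v : ℝ) ^ 2

noncomputable def alphaEnergy {n : ℕ} (G : SimpleGraph (Fin n)) [DecidableRel G.Adj] (α : ℝ) : ℝ :=
  ∑ i, |(alphaMatrix_isHermitian G α).eigenvalues i
        - 2 * α * (G.edgeFinset.card : ℝ) / n|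

noncomputable def adjEnergy {n : ℕ} (G : SimpleGraph (Fin n)) [DecidableRel G.Adj] : ℝ :=
  ∑ i, |(adjMatrix_isHermitian G).eigenvalues i|

lemma trace_eq_sum_ev {n : ℕ} (A : Matrix (Fin n) (Fin n) ℝ) (hA : A.IsHermitian) :
    A.trace = ∑ i, hA.eigenvalues i := by
  conv_lhs => rw [hA.spectral_theorem]
  rw [Unitary.conjStarAlgAut_apply]
  rw [Matrix.trace_mul_cycle,
    (Matrix.mem_unitaryGroup_iff').mp (hA.eigenvectorUnitary).2, one_mul, Matrix.trace_diagonal]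
  simp

lemma trace_sq_eq_sum_ev_sq {n : ℕ} (A : Matrix (Fin n) (Fin n) ℝ) (hA : A.IsHermitian) :
    (A * A).trace = ∑ i, hA.eigenvalues i ^ 2 := by
  conv_lhs => rw [hA.spectral_theorem]
  rw [Unitary.conjStarAlgAut_apply]
  rw [show ∀ U D Us : Matrix (Fin n) (Fin n) ℝ,
      (U * D * Us) * (U * D * Us) = U * (D * (Us * U) * D) * Us from
    fun U D Us => by noncomm_ring]
  rw [(Matrix.mem_unitaryGroup_iff').mp (hA.eigenvectorUnitary).2, mul_one,
    Matrix.trace_mul_cycle,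
    (Matrix.mem_unitaryGroup_iff').mp (hA.eigenvectorUnitary).2, one_mul,
    Matrix.diagonal_mul_diagonal, Matrix.trace_diagonal]
  simp [sq]

lemma alphaMatrix_trace {n : ℕ} (G : SimpleGraph (Fin n)) [DecidableRel G.Adj] (α : ℝ) :
    (alphaMatrix G α).trace = α * (2 * G.edgeFinset.card) := by
  unfold alphaMatrix
  have h := SimpleGraph.sum_degrees_eq_twice_card_edges G
  simp only [Matrix.trace_add, Matrix.trace_smul, SimpleGraph.trace_adjMatrix,
    Matrix.trace_diagonal, smul_eq_mul, mul_zero, add_zero, smul_zero]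
  rw [show ∑ v, (G.degree v : ℝ) = ((∑ v, G.degree v : ℕ) : ℝ) by push_cast; ring, h]
  push_cast
  ring

lemma alphaMatrix_trace_sq {n : ℕ} (G : SimpleGraph (Fin n)) [DecidableRel G.Adj] (α : ℝ) :
    ((alphaMatrix G α) * (alphaMatrix G α)).trace
      = α ^ 2 * zagreb G + (1 - α) ^ 2 * (2 * G.edgeFinset.card) := by
  unfold alphaMatrix zagreb
  have h := SimpleGraph.sum_degrees_eq_twice_card_edges G
  have h1 : (Matrix.diagonal (fun v => (G.degree v : ℝ)) * G.adjMatrix ℝ).trace = 0 := by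
    rw [Matrix.trace]
    apply Finset.sum_eq_zero; intro x _
    simp only [Matrix.diag, Matrix.mul_apply, SimpleGraph.adjMatrix_apply, Matrix.diagonal_apply]
    apply Finset.sum_eq_zero; intro y _
    by_cases hxy : x = y
    · subst hxy; simp [G.irrefl]
    · simp [hxy, Ne.symm hxy]
  have h2 : (G.adjMatrix ℝ * Matrix.diagonal (fun v => (G.degree v : ℝ))).trace = 0 := by
    rw [Matrix.trace]
    apply Finset.sum_eq_zero; intro x _
    simp only [Matrix.diag, Matrix.mul_apply, SimpleGraph.adjMatrix_apply, Matrix.diagonal_apply]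
    apply Finset.sum_eq_zero; intro y _
    by_cases hxy : x = y
    · subst hxy; simp [G.irrefl]
    · simp [hxy, Ne.symm hxy]
  have h3 : ((G.adjMatrix ℝ) * (G.adjMatrix ℝ)).trace = 2 * G.edgeFinset.card := by
    rw [Matrix.trace]
    simp only [Matrix.diag]
    rw [Finset.sum_congr rfl (fun i _ => G.adjMatrix_mul_self_apply_self i)]
    rw [show ∑ v : Fin n, (G.degree v : ℝ) = ((∑ v, G.degree v : ℕ) : ℝ) by push_cast; ring, h]
    push_cast; ring
  rw [add_mul, mul_add, mul_add, Matrix.trace_add, Matrix.trace_add, Matrix.trace_add]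
  simp only [Matrix.smul_mul, Matrix.mul_smul, Matrix.trace_smul, smul_smul, smul_eq_mul]
  rw [h1, h2, h3, Matrix.diagonal_mul_diagonal, Matrix.trace_diagonal]
  simp only [mul_zero, add_zero, zero_add]
  ring_nf

theorem stmt_6 {n : ℕ} (G : SimpleGraph (Fin n)) [DecidableRel G.Adj] (hG : G.Connected)
    (α : ℝ) (hα0 : 0 ≤ α) (hα1 : α ≤ 1) :
    alphaEnergy G α ≤
      Real.sqrt ((n : ℝ) *
        ∑ i, ((alphaMatrix_isHermitian G α).eigenvalues i - 2 * α * (G.edgeFinset.card : ℝ) / n) ^ 2) ∧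
    alphaEnergy G α ≤ Real.sqrt ((α ^ 2 * zagreb G + 2 * (G.edgeFinset.card : ℝ) * (1 - α) ^ 2 - 4 * α ^ 2 * (G.edgeFinset.card : ℝ) ^ 2 / n) * n) := by
  have hn : 0 < n := Fin.pos_iff_nonempty.mpr hG.nonempty
  have hn' : (0 : ℝ) < n := by exact_mod_cast hn
  set ev := (alphaMatrix_isHermitian G α).eigenvalues with hev
  set m : ℝ := (G.edgeFinset.card : ℝ) with hm
  set c : ℝ := 2 * α * m / n with hc
  have hsum1 : ∑ i, ev i = α * (2 * m) := by
    rw [← alphaMatrix_trace G α, trace_eq_sum_ev _ (alphaMatrix_isHermitian G α)]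
  have hsum2 : ∑ i, ev i ^ 2 = α ^ 2 * zagreb G + (1 - α) ^ 2 * (2 * m) := by
    rw [← alphaMatrix_trace_sq G α, trace_sq_eq_sum_ev_sq _ (alphaMatrix_isHermitian G α)]
  have hS : ∑ i, (ev i - c) ^ 2
      = α ^ 2 * zagreb G + 2 * m * (1 - α) ^ 2 - 4 * α ^ 2 * m ^ 2 / n := by
    have expand : ∑ i, (ev i - c) ^ 2
        = ∑ i, ev i ^ 2 - 2 * c * ∑ i, ev i + n * c ^ 2 := by
      rw [Finset.mul_sum]
      rw [show (n : ℝ) * c ^ 2 = ∑ _i : Fin n, c ^ 2 by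
        rw [Finset.sum_const, card_univ, Fintype.card_fin, nsmul_eq_mul]]
      rw [← Finset.sum_sub_distrib, ← Finset.sum_add_distrib]
      apply Finset.sum_congr rfl
      intro i _
      ring
    rw [expand, hsum1, hsum2, hc]
    field_simp
    ring
  have hmain : alphaEnergy G α ≤ Real.sqrt ((n : ℝ) * ∑ i, (ev i - c) ^ 2) := by
    apply Real.le_sqrt_of_sq_le
    have key := sq_sum_le_card_mul_sum_sq (s := (univ : Finset (Fin n)))
      (f := fun i => |ev i - c|)
    simp only [sq_abs, card_univ, Fintype.card_fin] at key
    calc alphaEnergy G α ^ 2 = (∑ i, |ev i - c|) ^ 2 := by rfl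
      _ ≤ (n : ℝ) * ∑ i, (ev i - c) ^ 2 := by exact_mod_cast key
  refine ⟨hmain, ?_⟩
  rw [show (α ^ 2 * zagreb G + 2 * m * (1 - α) ^ 2 - 4 * α ^ 2 * m ^ 2 / n) * n
      = (n : ℝ) * ∑ i, (ev i - c) ^ 2 by rw [hS]; ring]
  exact hmain
end

section
/- If G is a connected simple graph on n ≥ 3 vertices with m edges, then E(G) ≤ 2m/n + √((n−1)·[2m − (2m/n)²]), where E(G) is the (adjacency) energy of G. -/
open Matrix Finset

section AuxLemmas

open Matrix

variable {n : ℕ} {A : Matrix (Fin n) (Fin n) ℝ}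

lemma diag_ofReal_eq (f : Fin n → ℝ) :
    Matrix.diagonal ((RCLike.ofReal : ℝ → ℝ) ∘ f) = Matrix.diagonal f := by
  congr 1

lemma sum_eigenvalues_eq_trace' (hA : A.IsHermitian) :
    ∑ i, hA.eigenvalues i = A.trace := by
  have h : star (hA.eigenvectorUnitary : Matrix (Fin n) (Fin n) ℝ) * A *
      (hA.eigenvectorUnitary : Matrix (Fin n) (Fin n) ℝ) =
      Matrix.diagonal ((RCLike.ofReal : ℝ → ℝ) ∘ hA.eigenvalues) := by
    have h0 := hA.spectral_theorem
    rw [Unitary.conjStarAlgAut_apply] at h0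
    conv_lhs => enter [1, 2]; rw [h0]
    simp only [← Matrix.mul_assoc, Unitary.coe_star_mul_self, Matrix.one_mul]
    rw [Matrix.mul_assoc, Unitary.coe_star_mul_self, Matrix.mul_one]
  have hU : (hA.eigenvectorUnitary : Matrix (Fin n) (Fin n) ℝ) *
      star (hA.eigenvectorUnitary : Matrix (Fin n) (Fin n) ℝ) = 1 :=
    (Matrix.mem_unitaryGroup_iff).mp (hA.eigenvectorUnitary).2
  calc ∑ i, hA.eigenvalues i
      = (Matrix.diagonal ((RCLike.ofReal : ℝ → ℝ) ∘ hA.eigenvalues)).trace := by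
        rw [diag_ofReal_eq, Matrix.trace_diagonal]
    _ = (star (hA.eigenvectorUnitary : Matrix (Fin n) (Fin n) ℝ) * A *
          (hA.eigenvectorUnitary : Matrix (Fin n) (Fin n) ℝ)).trace := by rw [h]
    _ = A.trace := by
        rw [Matrix.trace_mul_cycle, hU, Matrix.one_mul]

lemma sum_sq_eigenvalues_eq_trace (hA : A.IsHermitian) :
    ∑ i, hA.eigenvalues i ^ 2 = (A * A).trace := by
  set U := (hA.eigenvectorUnitary : Matrix (Fin n) (Fin n) ℝ) with hUdef
  set D := Matrix.diagonal hA.eigenvalues with hDdef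
  have hU' : star U * U = 1 := Unitary.coe_star_mul_self hA.eigenvectorUnitary
  have h := hA.spectral_theorem
  rw [Unitary.conjStarAlgAut_apply] at h
  rw [diag_ofReal_eq] at h
  have hAA : A * A = U * (D * D) * star U := by
    calc A * A = (U * D * star U) * (U * D * star U) := by rw [← h]
      _ = U * (D * ((star U * U) * (D * star U))) := by
          simp only [Matrix.mul_assoc]
      _ = U * (D * D) * star U := by
          rw [hU', Matrix.one_mul]; simp only [Matrix.mul_assoc]
  rw [hAA, Matrix.trace_mul_cycle, hU', Matrix.one_mul, hDdef,
    Matrix.diagonal_mul_diagonal, Matrix.trace_diagonal]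
  simp [sq]

lemma exists_weights (hA : A.IsHermitian) (v : Fin n → ℝ) :
    ∃ y : Fin n → ℝ, (∑ i, y i ^ 2 = v ⬝ᵥ v) ∧
      (∑ i, hA.eigenvalues i * y i ^ 2 = v ⬝ᵥ (A *ᵥ v)) := by
  have h := hA.spectral_theorem
  rw [Unitary.conjStarAlgAut_apply] at h
  rw [diag_ofReal_eq] at h
  set U := (hA.eigenvectorUnitary : Matrix (Fin n) (Fin n) ℝ) with hUdef
  set D := Matrix.diagonal hA.eigenvalues with hDdef
  have hsU : star U = Uᵀ := by
    rw [Matrix.star_eq_conjTranspose, Matrix.conjTranspose_eq_transpose_of_trivial]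
  have hU' : star U * U = 1 := Unitary.coe_star_mul_self hA.eigenvectorUnitary
  have hU : U * star U = 1 := (Matrix.mem_unitaryGroup_iff).mp (hA.eigenvectorUnitary).2
  have hU'T : Uᵀ * U = 1 := by rw [← hsU]; exact hU'
  have hUT : U * Uᵀ = 1 := by rw [← hsU]; exact hU
  rw [hsU] at h
  set y : Fin n → ℝ := Uᵀ *ᵥ v with hydef
  refine ⟨y, ?_, ?_⟩
  · have h1 : ∑ i, y i ^ 2 = y ⬝ᵥ y := by
      simp [dotProduct, sq]
    rw [h1, hydef, Matrix.dotProduct_mulVec]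
    have h2 : (Uᵀ *ᵥ v) ᵥ* Uᵀ = (U * Uᵀ) *ᵥ v := by
      rw [Matrix.vecMul_transpose, Matrix.mulVec_mulVec]
    rw [h2, hUT, Matrix.one_mulVec]
  · have hAv : A *ᵥ v = U *ᵥ (D *ᵥ y) := by
      rw [h, hydef, Matrix.mulVec_mulVec, Matrix.mulVec_mulVec]
    rw [hAv, Matrix.dotProduct_mulVec, ← Matrix.mulVec_transpose, ← hydef]
    have hDy : D *ᵥ y = fun i => hA.eigenvalues i * y i := by
      ext i; rw [hDdef, Matrix.mulVec_diagonal]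
    rw [hDy]
    simp only [dotProduct]
    exact Finset.sum_congr rfl fun i _ => by ring

lemma key_ineq {c t L M : ℝ} (hc : 1 ≤ c) (htL : t ≤ L) (ht : 0 ≤ t)
    (hL2 : L ^ 2 ≤ M) (hnt : M ≤ (c + 1) * t ^ 2) :
    L + Real.sqrt (c * (M - L ^ 2)) ≤ t + Real.sqrt (c * (M - t ^ 2)) := by
  have hc0 : (0:ℝ) < c := lt_of_lt_of_le one_pos hc
  have ht2L2 : t ^ 2 ≤ L ^ 2 := by nlinarith
  set a := Real.sqrt (c * (M - t ^ 2)) with hadef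
  set b := Real.sqrt (c * (M - L ^ 2)) with hbdef
  have ha0 : 0 ≤ a := Real.sqrt_nonneg _
  have hb0 : 0 ≤ b := Real.sqrt_nonneg _
  have ha2 : a ^ 2 = c * (M - t ^ 2) := Real.sq_sqrt (by nlinarith)
  have hb2 : b ^ 2 = c * (M - L ^ 2) := Real.sq_sqrt (by nlinarith)
  have hba : b ≤ a := Real.sqrt_le_sqrt (by nlinarith)
  have hact : a ≤ c * t := by
    have h1 : c * (M - t ^ 2) ≤ (c * t) ^ 2 := by nlinarith
    calc a ≤ Real.sqrt ((c * t) ^ 2) := Real.sqrt_le_sqrt h1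
      _ = c * t := Real.sqrt_sq (by positivity)
  rcases eq_or_lt_of_le (by positivity : (0:ℝ) ≤ a + b) with hab | hab
  · have ha' : a = 0 := by linarith
    have hb' : b = 0 := by linarith
    have hMt : M = t ^ 2 := by
      have h0 : c * (M - t ^ 2) = 0 := by rw [← ha2, ha']; ring
      have := (mul_eq_zero.mp h0).resolve_left (ne_of_gt hc0)
      linarith
    have hML : M = L ^ 2 := by
      have h0 : c * (M - L ^ 2) = 0 := by rw [← hb2, hb']; ring
      have := (mul_eq_zero.mp h0).resolve_left (ne_of_gt hc0)
      linarith
    have hLt : L ≤ t := by nlinarith [hMt, hML, ht, htL]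
    linarith
  · have hsum : a + b ≤ c * (L + t) := by nlinarith [hba, hact, ht, htL, hc0.le]
    have hmul : (L - t) * (a + b) ≤ (L - t) * (c * (L + t)) :=
      mul_le_mul_of_nonneg_left hsum (sub_nonneg.mpr htL)
    have hkey : (L - t) * (a + b) ≤ (a - b) * (a + b) := by nlinarith [hmul, ha2, hb2]
    have : L - t ≤ a - b := le_of_mul_le_mul_right (by linarith [hkey]) hab
    linarith

end AuxLemmas

theorem stmt_8 {n : ℕ} (hn : 3 ≤ n) (G : SimpleGraph (Fin n)) [DecidableRel G.Adj]
    (hG : G.Connected) :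
    adjEnergy G ≤ 2 * (G.edgeFinset.card : ℝ) / n
      + Real.sqrt (((n : ℝ) - 1) * (2 * (G.edgeFinset.card : ℝ) - (2 * (G.edgeFinset.card : ℝ) / n) ^ 2)) := by
  classical
  have hA := adjMatrix_isHermitian G
  set A : Matrix (Fin n) (Fin n) ℝ := G.adjMatrix ℝ with hAdef
  set lam := (adjMatrix_isHermitian G).eigenvalues with hlamdef
  set m : ℝ := (G.edgeFinset.card : ℝ) with hmdef
  have hn1 : (1:ℝ) ≤ (n:ℝ) := by exact_mod_cast le_trans (by norm_num) hn
  have hn0 : (0:ℝ) < (n:ℝ) := lt_of_lt_of_le one_pos hn1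
  have hn3 : (3:ℝ) ≤ (n:ℝ) := by exact_mod_cast hn
  -- degree sum
  have hdeg : ∑ v, (G.degree v : ℝ) = 2 * m := by
    have h := G.sum_degrees_eq_twice_card_edges
    rw [hmdef]
    exact_mod_cast h
  -- every vertex has positive degree
  have hdegpos : ∀ v : Fin n, (1:ℝ) ≤ (G.degree v : ℝ) := by
    intro v
    have h2 : ∃ w, G.Adj v w := by
      have hv2 : ∃ w : Fin n, w ≠ v := by
        by_cases h0 : v = ⟨0, by omega⟩
        · exact ⟨⟨1, by omega⟩, by simp [h0, Fin.ext_iff]⟩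
        · exact ⟨⟨0, by omega⟩, fun hh => h0 hh.symm⟩
      obtain ⟨w, hw⟩ := hv2
      obtain ⟨p⟩ := hG.preconnected v w
      cases p with
      | nil => exact absurd rfl hw.symm
      | cons h _ => exact ⟨_, h⟩
    have := (G.degree_pos_iff_exists_adj v).mpr h2
    exact_mod_cast this
  have h2mn : (n:ℝ) ≤ 2 * m := by
    calc (n:ℝ) = ∑ _v : Fin n, (1:ℝ) := by simp
      _ ≤ ∑ v, (G.degree v : ℝ) := Finset.sum_le_sum fun v _ => hdegpos v
      _ = 2 * m := hdeg
  have hm0 : (0:ℝ) < m := by linarith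
  -- trace identities
  have hsum0 : ∑ i, lam i = 0 := by
    rw [hlamdef, sum_eigenvalues_eq_trace']
    exact G.trace_adjMatrix ℝ
  have hsum2 : ∑ i, lam i ^ 2 = 2 * m := by
    rw [hlamdef, sum_sq_eigenvalues_eq_trace]
    rw [Matrix.trace]
    calc ∑ i, (G.adjMatrix ℝ * G.adjMatrix ℝ).diag i
        = ∑ i, (G.degree i : ℝ) := by
          refine Finset.sum_congr rfl fun i _ => ?_
          exact G.adjMatrix_mul_self_apply_self i
      _ = 2 * m := hdeg
  -- Rayleigh with the all-ones vector
  obtain ⟨y, hy1, hy2⟩ := exists_weights (adjMatrix_isHermitian G) (fun _ => 1)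
  have hyv : ∑ i, y i ^ 2 = (n:ℝ) := by
    rw [hy1]; simp [dotProduct]
  have hyA : ∑ i, lam i * y i ^ 2 = 2 * m := by
    rw [hlamdef, hy2]
    have hAv : (G.adjMatrix ℝ *ᵥ fun _ => (1:ℝ)) = fun v => (G.degree v : ℝ) := by
      ext v
      have := SimpleGraph.adjMatrix_mulVec_const_apply (G := G) (a := (1:ℝ)) (v := v)
      simpa [Function.const] using this
    rw [hAv]
    simp only [dotProduct, one_mul]
    exact hdeg
  -- maximal eigenvalue
  obtain ⟨i₀, -, hmax⟩ := Finset.exists_max_image Finset.univ lam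
    ⟨⟨0, by omega⟩, Finset.mem_univ _⟩
  set L := lam i₀ with hLdef
  set t : ℝ := 2 * m / n with htdef
  have hL : t ≤ L := by
    have h1 : 2 * m ≤ L * (n:ℝ) := by
      calc 2 * m = ∑ i, lam i * y i ^ 2 := hyA.symm
        _ ≤ ∑ i, L * y i ^ 2 :=
            Finset.sum_le_sum fun i _ =>
              mul_le_mul_of_nonneg_right (hmax i (Finset.mem_univ i)) (sq_nonneg _)
        _ = L * ∑ i, y i ^ 2 := by rw [Finset.mul_sum]
        _ = L * (n:ℝ) := by rw [hyv]
    rw [htdef, div_le_iff₀ hn0]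
    linarith
  have ht1 : 1 ≤ t := by
    rw [htdef, le_div_iff₀ hn0]
    linarith
  have ht0 : 0 ≤ t := by linarith
  have hL0 : 0 < L := by linarith
  have hL2 : L ^ 2 ≤ 2 * m := by
    rw [hLdef, ← hsum2]
    exact Finset.single_le_sum (f := fun i => lam i ^ 2) (fun i _ => sq_nonneg _)
      (Finset.mem_univ i₀)
  -- split the energy sum
  have hsplit : adjEnergy G = |L| + ∑ i ∈ Finset.univ.erase i₀, |lam i| := by
    rw [adjEnergy, ← Finset.add_sum_erase Finset.univ _ (Finset.mem_univ i₀)]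
  have hErase2 : ∑ i ∈ Finset.univ.erase i₀, lam i ^ 2 = 2 * m - L ^ 2 := by
    have h' : lam i₀ ^ 2 + ∑ x ∈ Finset.univ.erase i₀, lam x ^ 2 = ∑ i, lam i ^ 2 :=
      Finset.add_sum_erase Finset.univ (fun i => lam i ^ 2) (Finset.mem_univ i₀)
    rw [hsum2] at h'
    linarith [h', hLdef]
  have hcard : ((Finset.univ.erase i₀).card : ℝ) = (n:ℝ) - 1 := by
    rw [Finset.card_erase_of_mem (Finset.mem_univ i₀), Finset.card_univ,
      Fintype.card_fin]
    have : 1 ≤ n := by omega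
    push_cast [Nat.cast_sub this]
    ring
  have hCS : ∑ i ∈ Finset.univ.erase i₀, |lam i| ≤
      Real.sqrt (((n:ℝ) - 1) * (2 * m - L ^ 2)) := by
    rw [Real.le_sqrt (Finset.sum_nonneg fun i _ => abs_nonneg _)
      (by nlinarith : (0:ℝ) ≤ ((n:ℝ) - 1) * (2 * m - L ^ 2))]
    calc (∑ i ∈ Finset.univ.erase i₀, |lam i|) ^ 2
        ≤ ((Finset.univ.erase i₀).card : ℝ) * ∑ i ∈ Finset.univ.erase i₀, |lam i| ^ 2 :=
          sq_sum_le_card_mul_sum_sq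
      _ = ((n:ℝ) - 1) * (2 * m - L ^ 2) := by
          rw [hcard]
          congr 1
          rw [← hErase2]
          exact Finset.sum_congr rfl fun i _ => sq_abs _
  have hkey : L + Real.sqrt (((n:ℝ) - 1) * (2 * m - L ^ 2)) ≤
      t + Real.sqrt (((n:ℝ) - 1) * (2 * m - t ^ 2)) := by
    refine key_ineq ?_ hL ht0 hL2 ?_
    · linarith [hn3]
    · have hnn : ((n:ℝ) - 1) + 1 = (n:ℝ) := by ring
      rw [hnn, htdef, div_pow]
      have hr : (n:ℝ) * ((2 * m) ^ 2 / (n:ℝ) ^ 2) = (2 * m) ^ 2 / (n:ℝ) := by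
        field_simp
      rw [hr, le_div_iff₀ hn0]
      nlinarith [h2mn, hm0]
  calc adjEnergy G = |L| + ∑ i ∈ Finset.univ.erase i₀, |lam i| := hsplit
    _ ≤ L + Real.sqrt (((n:ℝ) - 1) * (2 * m - L ^ 2)) := by
        rw [abs_of_pos hL0]
        exact add_le_add_right hCS L
    _ ≤ t + Real.sqrt (((n:ℝ) - 1) * (2 * m - t ^ 2)) := hkey
    _ = 2 * m / n + Real.sqrt (((n:ℝ) - 1) * (2 * m - (2 * m / n) ^ 2)) := by rw [htdef]
end

section
/- If G is a connected simple graph on n ≥ 3 vertices with m edges and Zagreb index Zg(G), then QE(G) ≤ 2m/n + √((n−1)·[2m + Zg(G) − (4m²/n)(1 + 1/n)]), where QE(G) is the signless Laplacian energy of G. -/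
open Matrix Finset

noncomputable def signlessLap {n : ℕ} (G : SimpleGraph (Fin n)) [DecidableRel G.Adj] :
    Matrix (Fin n) (Fin n) ℝ :=
  Matrix.diagonal (fun v => (G.degree v : ℝ)) + G.adjMatrix ℝ

lemma signlessLap_isHermitian {n : ℕ} (G : SimpleGraph (Fin n)) [DecidableRel G.Adj] :
    (signlessLap G).IsHermitian := by
  rw [Matrix.IsHermitian, conjTranspose_eq_transpose_of_trivial]
  unfold signlessLap
  rw [Matrix.transpose_add, Matrix.diagonal_transpose, (G.isSymm_adjMatrix (α := ℝ))]

noncomputable def signlessLapEnergy {n : ℕ} (G : SimpleGraph (Fin n)) [DecidableRel G.Adj] : ℝ :=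
  ∑ i, |(signlessLap_isHermitian G).eigenvalues i - 2 * (G.edgeFinset.card : ℝ) / n|

section Aux

variable {k : Type*} [Fintype k] [DecidableEq k]

lemma aux_trace_eq_sum_eigs {A : Matrix k k ℝ} (hA : A.IsHermitian) :
    A.trace = ∑ i, hA.eigenvalues i := by
  conv_lhs => rw [hA.spectral_theorem, Unitary.conjStarAlgAut_apply]
  rw [Matrix.trace_mul_cycle]
  simp [Matrix.trace_diagonal]

lemma aux_trace_sq_eq_sum_sq {A : Matrix k k ℝ} (hA : A.IsHermitian) :
    (A * A).trace = ∑ i, hA.eigenvalues i ^ 2 := by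
  have hU : (star (hA.eigenvectorUnitary : Matrix k k ℝ)) * (hA.eigenvectorUnitary : Matrix k k ℝ) = 1 :=
    Unitary.coe_star_mul_self _
  conv_lhs => rw [hA.spectral_theorem, Unitary.conjStarAlgAut_apply]
  rw [show ∀ U D : Matrix k k ℝ, (U * D * star U) * (U * D * star U)
      = U * (D * (star U * U) * D) * star U by intros; noncomm_ring]
  rw [hU, Matrix.trace_mul_cycle]
  rw [hU]
  simp [Matrix.diagonal_mul_diagonal, Matrix.trace_diagonal, sq]

lemma aux_quadform_eq {A : Matrix k k ℝ} (hA : A.IsHermitian) (v : k → ℝ) :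
    v ⬝ᵥ (A *ᵥ v) = ∑ i, hA.eigenvalues i
      * ((star (hA.eigenvectorUnitary : Matrix k k ℝ) *ᵥ v) i)^2 := by
  set U : Matrix k k ℝ := (hA.eigenvectorUnitary : Matrix k k ℝ)
  set w := star U *ᵥ v with hw
  conv_lhs => rw [hA.spectral_theorem, Unitary.conjStarAlgAut_apply]
  rw [← mulVec_mulVec, ← mulVec_mulVec, dotProduct_mulVec v U]
  have hvU : v ᵥ* U = w := by
    rw [hw]
    ext i
    simp [vecMul, mulVec, dotProduct, star]
    exact Finset.sum_congr rfl fun j _ => mul_comm _ _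
  rw [hvU]
  simp [dotProduct, mulVec_diagonal, sq]
  exact Finset.sum_congr rfl fun j _ => by ring

lemma aux_norm_eq {A : Matrix k k ℝ} (hA : A.IsHermitian) (v : k → ℝ) :
    v ⬝ᵥ v = ∑ i, ((star (hA.eigenvectorUnitary : Matrix k k ℝ) *ᵥ v) i)^2 := by
  set U : Matrix k k ℝ := (hA.eigenvectorUnitary : Matrix k k ℝ)
  have hUU : U * star U = 1 := Unitary.coe_mul_star_self _
  have h1 : ∑ i, ((star U *ᵥ v) i)^2 = (star U *ᵥ v) ⬝ᵥ (star U *ᵥ v) := by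
    simp [dotProduct, sq]
  rw [h1, dotProduct_mulVec, ← mulVec_transpose]
  have h2 : (star U)ᵀ = U := by
    ext i j; simp [star, conjTranspose]
  rw [h2, mulVec_mulVec, hUU, one_mulVec]

end Aux

section GraphAux

variable {n : ℕ} (G : SimpleGraph (Fin n)) [DecidableRel G.Adj]

lemma sl_trace : (signlessLap G).trace = 2 * (G.edgeFinset.card : ℝ) := by
  unfold signlessLap
  rw [Matrix.trace_add, Matrix.trace_diagonal, SimpleGraph.trace_adjMatrix, add_zero]
  rw [← Nat.cast_sum, SimpleGraph.sum_degrees_eq_twice_card_edges]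
  push_cast; ring

lemma sl_trace_sq : ((signlessLap G) * (signlessLap G)).trace
    = 2 * (G.edgeFinset.card : ℝ) + ∑ v, (G.degree v : ℝ)^2 := by
  unfold signlessLap
  set D : Matrix (Fin n) (Fin n) ℝ := Matrix.diagonal (fun v => (G.degree v : ℝ))
  set A : Matrix (Fin n) (Fin n) ℝ := G.adjMatrix ℝ
  have h1 : (D + A) * (D + A) = D * D + (D * A + A * D) + A * A := by noncomm_ring
  rw [h1, Matrix.trace_add, Matrix.trace_add]
  have hDD : (D * D).trace = ∑ v, (G.degree v : ℝ)^2 := by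
    simp [D, Matrix.diagonal_mul_diagonal, Matrix.trace_diagonal, sq]
  have hDA : (D * A + A * D).trace = 0 := by
    rw [Matrix.trace_add]
    have hth : ∀ v, (D * A) v v = 0 := by
      intro v
      rw [Matrix.mul_apply]
      apply Finset.sum_eq_zero
      intro x _
      by_cases h : v = x
      · subst h; simp [A]
      · simp [D, Matrix.diagonal_apply_ne _ h]
    have h2 : ∀ v, (A * D) v v = 0 := by
      intro v
      rw [Matrix.mul_apply]
      apply Finset.sum_eq_zero
      intro x _
      by_cases h : x = v
      · subst h; simp [A]
      · exact mul_eq_zero_of_right _ (Matrix.diagonal_apply_ne _ h)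
    simp [Matrix.trace, Matrix.diag, hth, h2]
  have hAA : (A * A).trace = 2 * (G.edgeFinset.card : ℝ) := by
    rw [Matrix.trace]
    have : ∀ v, (A * A) v v = (G.degree v : ℝ) := fun v => G.adjMatrix_mul_self_apply_self v
    simp only [Matrix.diag, this]
    rw [← Nat.cast_sum, SimpleGraph.sum_degrees_eq_twice_card_edges]
    push_cast; ring
  rw [hDD, hDA, hAA]; ring

lemma sl_quad_one : (fun _ => (1:ℝ)) ⬝ᵥ ((signlessLap G) *ᵥ (fun _ => (1:ℝ)))
    = 4 * (G.edgeFinset.card : ℝ) := by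
  unfold signlessLap
  rw [add_mulVec, dotProduct_add]
  have h1 : (fun _ => (1:ℝ)) ⬝ᵥ ((Matrix.diagonal (fun v => (G.degree v : ℝ))) *ᵥ (fun _ => (1:ℝ)))
      = 2 * (G.edgeFinset.card : ℝ) := by
    simp only [dotProduct, mulVec_diagonal, mul_one, one_mul]
    rw [← Nat.cast_sum, SimpleGraph.sum_degrees_eq_twice_card_edges]
    push_cast; ring
  have h2 : (fun _ => (1:ℝ)) ⬝ᵥ ((G.adjMatrix ℝ) *ᵥ (fun _ => (1:ℝ)))
      = 2 * (G.edgeFinset.card : ℝ) := by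
    simp only [dotProduct, one_mul]
    have : ∀ v : Fin n, ((G.adjMatrix ℝ) *ᵥ (fun _ => (1:ℝ))) v = (G.degree v : ℝ) := by
      intro v
      rw [SimpleGraph.adjMatrix_mulVec_apply]
      rw [Finset.sum_const, nsmul_eq_mul, mul_one, SimpleGraph.card_neighborFinset_eq_degree]
    rw [Finset.sum_congr rfl (fun v _ => this v), ← Nat.cast_sum,
      SimpleGraph.sum_degrees_eq_twice_card_edges]
    push_cast; ring
  rw [h1, h2]; ring

lemma sl_posSemidef : (signlessLap G).PosSemidef := by
  classical
  have h : signlessLap G = G.incMatrix ℝ * (G.incMatrix ℝ)ᵀ := by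
    rw [SimpleGraph.incMatrix_mul_transpose]
    ext a b
    unfold signlessLap
    by_cases hab : a = b
    · subst hab; simp [Matrix.diagonal_apply]
    · simp [Matrix.diagonal_apply, hab, SimpleGraph.adjMatrix_apply]
  rw [h, ← conjTranspose_eq_transpose_of_trivial]
  exact Matrix.posSemidef_self_mul_conjTranspose _

end GraphAux


lemma aux_key (N S x μ : ℝ) (hN3 : 3 ≤ N) (hμ0 : 0 ≤ μ) (hxμ : μ ≤ x)
    (hSx : x^2 ≤ S) (hSμx : S ≤ N * μ * x) :
    x + Real.sqrt ((N - 1) * (S - x^2)) ≤ μ + Real.sqrt ((N - 1) * (S - μ^2)) := by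
  have hx0 : 0 ≤ x := le_trans hμ0 hxμ
  set a : ℝ := Real.sqrt ((N - 1) * (S - x^2)) with ha
  have ha0 : 0 ≤ a := Real.sqrt_nonneg _
  have ha2 : a^2 = (N - 1) * (S - x^2) :=
    Real.sq_sqrt (mul_nonneg (by linarith) (by linarith))
  have hb0 : (0:ℝ) ≤ ((N - 2) * x + N * μ) / 2 := by
    have h1 : (0:ℝ) ≤ (N - 2) * x := mul_nonneg (by linarith) hx0
    have h2 : (0:ℝ) ≤ N * μ := mul_nonneg (by linarith) hμ0
    linarith
  have hmul : (N - 1) * S ≤ (N - 1) * (N * μ * x) :=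
    mul_le_mul_of_nonneg_left hSμx (by linarith)
  have hab : a ≤ ((N - 2) * x + N * μ) / 2 := by
    have h1 : a^2 ≤ (((N - 2) * x + N * μ) / 2)^2 := by
      rw [ha2]
      nlinarith [sq_nonneg (N * (x - μ)), hmul]
    nlinarith [h1, ha0, hb0]
  have hfinal : (x - μ + a)^2 ≤ (N - 1) * (S - μ^2) := by
    have hexp : (x - μ + a)^2 = (x - μ)^2 + 2 * (x - μ) * a + a^2 := by ring
    rw [hexp, ha2]
    have h2 : 2 * (x - μ) * a ≤ 2 * (x - μ) * (((N - 2) * x + N * μ) / 2) :=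
      mul_le_mul_of_nonneg_left hab (by linarith)
    have h3 : (x - μ)^2 + 2 * (x - μ) * (((N - 2) * x + N * μ) / 2) + (N - 1) * (S - x^2)
        = (N - 1) * (S - μ^2) := by ring
    linarith
  have hle : x - μ + a ≤ Real.sqrt ((N - 1) * (S - μ^2)) := Real.le_sqrt_of_sq_le hfinal
  linarith

set_option maxHeartbeats 1000000 in
theorem stmt_9 {n : ℕ} (hn : 3 ≤ n) (G : SimpleGraph (Fin n)) [DecidableRel G.Adj]
    (hG : G.Connected) :
    signlessLapEnergy G ≤ 2 * (G.edgeFinset.card : ℝ) / n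
      + Real.sqrt (((n : ℝ) - 1) *
          (2 * (G.edgeFinset.card : ℝ) + zagreb G - (4 * (G.edgeFinset.card : ℝ) ^ 2 / n) * (1 + 1 / n))) := by
  classical
  have hQ := signlessLap_isHermitian G
  set f : Fin n → ℝ := hQ.eigenvalues with hf
  set m : ℝ := (G.edgeFinset.card : ℝ) with hm
  set N : ℝ := (n : ℝ) with hN
  have hN3 : (3:ℝ) ≤ N := by rw [hN]; exact_mod_cast hn
  have hNpos : 0 < N := by linarith
  have hm0 : 0 ≤ m := by positivity
  set μ : ℝ := 2 * m / N with hμ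
  have hμ0 : 0 ≤ μ := by positivity
  -- basic spectral identities
  have hsum : ∑ i, f i = 2 * m := by
    rw [← aux_trace_eq_sum_eigs hQ, sl_trace]
  have hsumsq : ∑ i, f i ^ 2 = 2 * m + zagreb G := by
    rw [← aux_trace_sq_eq_sum_sq hQ, sl_trace_sq]; rfl
  have hf0 : ∀ i, 0 ≤ f i := fun i => (sl_posSemidef G).eigenvalues_nonneg i
  -- Rayleigh for the all-ones vector
  have hne : (univ : Finset (Fin n)).Nonempty := by
    rw [← Finset.card_pos]
    simp only [Finset.card_univ, Fintype.card_fin]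
    omega
  obtain ⟨i₀, -, hmax⟩ := Finset.exists_max_image univ f hne
  have hmax' : ∀ i, f i ≤ f i₀ := fun i => hmax i (Finset.mem_univ i)
  have hray : 4 * m ≤ N * f i₀ := by
    have hq := aux_quadform_eq hQ (fun _ => (1:ℝ))
    have hv := aux_norm_eq hQ (fun _ => (1:ℝ))
    rw [sl_quad_one] at hq
    have hvv : ((fun _ => (1:ℝ)) : Fin n → ℝ) ⬝ᵥ ((fun _ => (1:ℝ)) : Fin n → ℝ) = N := by
      simp [dotProduct, hN]
    rw [hvv] at hv
    set w := (star (hQ.eigenvectorUnitary : Matrix (Fin n) (Fin n) ℝ) *ᵥ (fun _ => (1:ℝ)))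
    calc 4 * m = ∑ i, f i * (w i)^2 := hq
      _ ≤ ∑ i, f i₀ * (w i)^2 := by
          apply Finset.sum_le_sum
          intro i _
          exact mul_le_mul_of_nonneg_right (hmax' i) (sq_nonneg _)
      _ = f i₀ * ∑ i, (w i)^2 := by rw [Finset.mul_sum]
      _ = N * f i₀ := by rw [← hv]; ring
  set x : ℝ := f i₀ - μ with hx
  have hxμ : μ ≤ x := by
    rw [hx, hμ, le_sub_iff_add_le, ← add_div, div_le_iff₀ hNpos]
    nlinarith [hray]
  have hx0 : 0 ≤ x := le_trans hμ0 hxμ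
  set S : ℝ := ∑ i, (f i - μ)^2 with hS
  have hd_sum : ∑ i, (f i - μ) = 0 := by
    rw [Finset.sum_sub_distrib, hsum, Finset.sum_const, Finset.card_univ, Fintype.card_fin,
      nsmul_eq_mul, hμ, ← hN]
    field_simp
    ring
  have hS_eq : S = 2 * m + zagreb G - 4 * m^2 / N := by
    have expand : S = ∑ i, f i ^ 2 - 2 * μ * ∑ i, f i + N * μ^2 := by
      rw [hS]
      rw [Finset.sum_congr rfl (fun i _ => show (f i - μ)^2 = f i ^2 - 2*μ* f i + μ^2 from by ring)]
      rw [Finset.sum_add_distrib, Finset.sum_sub_distrib, Finset.sum_const, Finset.card_univ,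
        Fintype.card_fin, nsmul_eq_mul, ← hN, Finset.mul_sum]
    rw [expand, hsumsq, hsum, hμ]
    field_simp
    ring
  have hSx : x^2 ≤ S := by
    rw [hS]
    have := Finset.single_le_sum (f := fun i => (f i - μ)^2)
      (fun i _ => sq_nonneg _) (Finset.mem_univ i₀)
    simpa [← hx] using this
  have hSμx : S ≤ N * μ * x := by
    have hpt : ∀ i, (f i - μ)^2 ≤ (x - μ) * (f i - μ) + μ * x := by
      intro i
      have h1 : f i - μ ≤ x := by simp only [hx]; linarith [hmax' i]
      have h2 : -μ ≤ f i - μ := by linarith [hf0 i]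
      nlinarith
    calc S ≤ ∑ i, ((x - μ) * (f i - μ) + μ * x) := Finset.sum_le_sum (fun i _ => hpt i)
      _ = (x - μ) * ∑ i, (f i - μ) + N * (μ * x) := by
          rw [Finset.sum_add_distrib, ← Finset.mul_sum, Finset.sum_const, Finset.card_univ,
            Fintype.card_fin, nsmul_eq_mul, ← hN]
      _ = N * μ * x := by rw [hd_sum]; ring
  have hSμ2 : μ^2 ≤ S := le_trans (by nlinarith [hμ0, hxμ]) hSx
  -- rewrite the target sqrt argument
  have htarget : 2 * m + zagreb G - (4 * m^2 / N) * (1 + 1/N) = S - μ^2 := by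
    rw [hS_eq, hμ]
    field_simp
    ring
  -- split the energy sum
  have hQE : signlessLapEnergy G = |f i₀ - μ| + ∑ i ∈ univ.erase i₀, |f i - μ| := by
    unfold signlessLapEnergy
    rw [← Finset.add_sum_erase _ _ (Finset.mem_univ i₀)]
  have habs : |f i₀ - μ| = x := by
    rw [← hx, abs_of_nonneg hx0]
  -- Cauchy-Schwarz on the rest
  have hcard : ((univ.erase i₀).card : ℝ) = N - 1 := by
    rw [Finset.card_erase_of_mem (Finset.mem_univ i₀), Finset.card_univ, Fintype.card_fin, hN]
    have h1 : (1:ℕ) ≤ n := by omega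
    rw [Nat.cast_sub h1, Nat.cast_one]
  have herase_sq : ∑ i ∈ univ.erase i₀, (f i - μ)^2 = S - x^2 := by
    rw [hS, ← Finset.add_sum_erase _ _ (Finset.mem_univ i₀), ← hx]
    ring
  have hCS : ∑ i ∈ univ.erase i₀, |f i - μ| ≤ Real.sqrt ((N - 1) * (S - x^2)) := by
    apply Real.le_sqrt_of_sq_le
    calc (∑ i ∈ univ.erase i₀, |f i - μ|)^2
        = (∑ i ∈ univ.erase i₀, 1 * |f i - μ|)^2 := by simp
      _ ≤ (∑ _i ∈ univ.erase i₀, (1:ℝ)^2) * ∑ i ∈ univ.erase i₀, |f i - μ|^2 :=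
          Finset.sum_mul_sq_le_sq_mul_sq _ _ _
      _ = (N - 1) * (S - x^2) := by
          rw [show ∑ i ∈ univ.erase i₀, |f i - μ|^2 = ∑ i ∈ univ.erase i₀, (f i - μ)^2 from
            Finset.sum_congr rfl (fun i _ => sq_abs _), herase_sq]
          congr 1
          rw [Finset.sum_const, nsmul_eq_mul, one_pow, mul_one]
          exact hcard
  -- the key analytic estimate
  have hkey : x + Real.sqrt ((N - 1) * (S - x^2)) ≤ μ + Real.sqrt ((N - 1) * (S - μ^2)) :=
    aux_key N S x μ hN3 hμ0 hxμ hSx hSμx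
  -- put everything together
  rw [hQE, habs, htarget]
  calc x + ∑ i ∈ univ.erase i₀, |f i - μ| ≤ x + Real.sqrt ((N - 1) * (S - x^2)) := by
        linarith [hCS]
    _ ≤ μ + Real.sqrt ((N - 1) * (S - μ^2)) := hkey
end

section
/- Let G be a connected simple graph on n ≥ 3 vertices, let e be an edge of G, and let G′ = G − e be the graph obtained from G by deleting the edge e. If 1/2 ≤ α < 1, then for every 1 ≤ i ≤ n the i-th largest eigenvalue of A_α(G) is at least the i-th largest eigenvalue of A_α(G′); that is, ρ_i(G) ≥ ρ_i(G′). -/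
open Matrix Finset

local notation "⟪" x ", " y "⟫" => @inner ℝ _ _ x y

-- inner product of two combinations of an orthonormal family
lemma quad_eq {E : Type*} [NormedAddCommGroup E] [InnerProductSpace ℝ E]
    {ι : Type*} [Fintype ι] (b : ι → E) (hb : Orthonormal ℝ b) (c d : ι → ℝ) :
    ⟪∑ j, c j • b j, ∑ j, d j • b j⟫ = ∑ j, c j * d j := by
  classical
  rw [sum_inner]
  have : ∀ j, ⟪c j • b j, ∑ k, d k • b k⟫ = c j * d j := by
    intro j
    rw [inner_sum]
    have : ∀ k, ⟪c j • b j, d k • b k⟫ = c j * d k * (if j = k then (1:ℝ) else 0) := by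
      intro k
      rw [real_inner_smul_left, real_inner_smul_right, orthonormal_iff_ite.mp hb]
      ring
    simp only [this, Finset.sum_mul_boole, Finset.mem_univ, if_true]
  simp only [this]

lemma eigen_apply {n : ℕ} (A : Matrix (Fin n) (Fin n) ℝ) (hA : A.IsHermitian) (j : Fin n) :
    Matrix.toEuclideanLin A (hA.eigenvectorBasis j) = hA.eigenvalues j • hA.eigenvectorBasis j := by
  apply (WithLp.equiv 2 (Fin n → ℝ)).injective
  simp only [Matrix.toEuclideanLin_apply]
  ext i
  have := hA.mulVec_eigenvectorBasis j
  have h2 := congrFun this i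
  simpa using h2

lemma quad_comb {n : ℕ} (A : Matrix (Fin n) (Fin n) ℝ) (hA : A.IsHermitian)
    {ι : Type*} [Fintype ι] (f : ι → Fin n) (c : ι → ℝ) :
    Matrix.toEuclideanLin A (∑ j, c j • hA.eigenvectorBasis (f j))
      = ∑ j, (c j * hA.eigenvalues (f j)) • hA.eigenvectorBasis (f j) := by
  rw [map_sum]
  apply Finset.sum_congr rfl
  intro j _
  rw [_root_.map_smul, eigen_apply, smul_smul]

lemma quad_le {n : ℕ} (A : Matrix (Fin n) (Fin n) ℝ) (hA : A.IsHermitian)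
    {ι : Type*} [Fintype ι] (f : ι → Fin n) (hf : Function.Injective f)
    (r : ℝ) (hr : ∀ j, hA.eigenvalues (f j) ≤ r) (c : ι → ℝ) :
    ⟪∑ j, c j • hA.eigenvectorBasis (f j),
       Matrix.toEuclideanLin A (∑ j, c j • hA.eigenvectorBasis (f j))⟫
      ≤ r * ⟪∑ j, c j • hA.eigenvectorBasis (f j), ∑ j, c j • hA.eigenvectorBasis (f j)⟫ := by
  have hb : Orthonormal ℝ (fun j => hA.eigenvectorBasis (f j)) :=
    (hA.eigenvectorBasis.orthonormal).comp f hf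
  rw [quad_comb, quad_eq _ hb, quad_eq _ hb, Finset.mul_sum]
  apply Finset.sum_le_sum
  intro j _
  have h1 : c j * (c j * hA.eigenvalues (f j)) = hA.eigenvalues (f j) * (c j)^2 := by ring
  have h2 : r * (c j * c j) = r * (c j)^2 := by ring
  rw [h1, h2]
  exact mul_le_mul_of_nonneg_right (hr j) (sq_nonneg _)

lemma quad_ge {n : ℕ} (A : Matrix (Fin n) (Fin n) ℝ) (hA : A.IsHermitian)
    {ι : Type*} [Fintype ι] (f : ι → Fin n) (hf : Function.Injective f)
    (r : ℝ) (hr : ∀ j, r ≤ hA.eigenvalues (f j)) (c : ι → ℝ) :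
    r * ⟪∑ j, c j • hA.eigenvectorBasis (f j), ∑ j, c j • hA.eigenvectorBasis (f j)⟫
      ≤ ⟪∑ j, c j • hA.eigenvectorBasis (f j),
          Matrix.toEuclideanLin A (∑ j, c j • hA.eigenvectorBasis (f j))⟫ := by
  have hb : Orthonormal ℝ (fun j => hA.eigenvectorBasis (f j)) :=
    (hA.eigenvectorBasis.orthonormal).comp f hf
  rw [quad_comb, quad_eq _ hb, quad_eq _ hb, Finset.mul_sum]
  apply Finset.sum_le_sum
  intro j _
  have h1 : c j * (c j * hA.eigenvalues (f j)) = hA.eigenvalues (f j) * (c j)^2 := by ring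
  have h2 : r * (c j * c j) = r * (c j)^2 := by ring
  rw [h1, h2]
  exact mul_le_mul_of_nonneg_right (hr j) (sq_nonneg _)

lemma deg_del {n : ℕ} (G G' : SimpleGraph (Fin n)) [DecidableRel G.Adj] [DecidableRel G'.Adj]
    (u v : Fin n) (huv : G.Adj u v) (hG' : G' = G.deleteEdges {s(u, v)}) (w : Fin n) :
    (G'.degree w : ℝ) = (G.degree w : ℝ) - (if w = u ∨ w = v then 1 else 0) := by
  have hne : u ≠ v := huv.ne
  by_cases hwu : w = u
  · subst hwu
    have hN : G'.neighborFinset w = G.neighborFinset w \ {v} := by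
      ext b
      simp only [SimpleGraph.mem_neighborFinset, hG', SimpleGraph.deleteEdges_adj,
        Set.mem_singleton_iff, Finset.mem_sdiff, Finset.mem_singleton, Sym2.eq_iff]
      tauto
    have hv : v ∈ G.neighborFinset w := (SimpleGraph.mem_neighborFinset _ _ _).2 huv
    have hone : 1 ≤ G.degree w := Finset.card_pos.2 ⟨v, hv⟩
    have : G'.degree w = G.degree w - 1 := by
      rw [SimpleGraph.degree, SimpleGraph.degree, hN,
        Finset.card_sdiff_of_subset (Finset.singleton_subset_iff.2 hv), Finset.card_singleton]
    rw [this, Nat.cast_sub hone]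
    simp
  · by_cases hwv : w = v
    · subst hwv
      have hN : G'.neighborFinset w = G.neighborFinset w \ {u} := by
        ext b
        simp only [SimpleGraph.mem_neighborFinset, hG', SimpleGraph.deleteEdges_adj,
          Set.mem_singleton_iff, Finset.mem_sdiff, Finset.mem_singleton, Sym2.eq_iff]
        tauto
      have hu : u ∈ G.neighborFinset w := (SimpleGraph.mem_neighborFinset _ _ _).2 huv.symm
      have hone : 1 ≤ G.degree w := Finset.card_pos.2 ⟨u, hu⟩
      have : G'.degree w = G.degree w - 1 := by
        rw [SimpleGraph.degree, SimpleGraph.degree, hN,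
          Finset.card_sdiff_of_subset (Finset.singleton_subset_iff.2 hu), Finset.card_singleton]
      rw [this, Nat.cast_sub hone]
      simp [hwu]
    · have hN : G'.neighborFinset w = G.neighborFinset w := by
        ext b
        simp only [SimpleGraph.mem_neighborFinset, hG', SimpleGraph.deleteEdges_adj,
          Set.mem_singleton_iff, Sym2.eq_iff]
        tauto
      rw [SimpleGraph.degree, SimpleGraph.degree, hN]
      simp [hwu, hwv]


lemma inner_stdBasis {n : ℕ} (a b : Fin n) (c : ℝ) (x : EuclideanSpace ℝ (Fin n)) :
    ⟪x, Matrix.toEuclideanLin (Matrix.single a b c) x⟫ = x a * (c * x b) := by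
  rw [Matrix.toEuclideanLin_apply, Matrix.single_mulVec, PiLp.inner_apply]
  simp only [Function.update_apply,
    RCLike.inner_apply, conj_trivial, Pi.zero_apply, ite_mul, zero_mul]
  rw [Finset.sum_ite_eq' Finset.univ a (fun i => c * x b * x i)]
  simp only [Finset.mem_univ, if_true]
  ring

set_option maxHeartbeats 1000000 in
lemma diff_eq {n : ℕ} (G G' : SimpleGraph (Fin n)) [DecidableRel G.Adj] [DecidableRel G'.Adj]
    (u v : Fin n) (huv : G.Adj u v) (hG' : G' = G.deleteEdges {s(u, v)}) (α : ℝ) :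
    alphaMatrix G α - alphaMatrix G' α =
      Matrix.single u u α + Matrix.single v v α +
      Matrix.single u v (1 - α) + Matrix.single v u (1 - α) := by
  have hne : u ≠ v := huv.ne
  ext a b
  have hdeg := deg_del G G' u v huv hG'
  have hadjval : ∀ a b : Fin n, s(a, b) = s(u, v) → (G.adjMatrix ℝ) a b = 1 := by
    intro a b h
    rw [Sym2.eq_iff] at h
    rcases h with ⟨rfl, rfl⟩ | ⟨rfl, rfl⟩
    · simp [huv]
    · simp [huv.symm]
  have hadj : ∀ a b : Fin n, (G'.adjMatrix ℝ) a b
      = (G.adjMatrix ℝ) a b - (if (a = u ∧ b = v) ∨ (a = v ∧ b = u) then 1 else 0) := by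
    intro a b
    by_cases h : s(a, b) = s(u, v)
    · have h2 := h
      rw [Sym2.eq_iff] at h2
      rw [if_pos h2, hadjval a b h]
      simp only [SimpleGraph.adjMatrix_apply, hG', SimpleGraph.deleteEdges_adj,
        Set.mem_singleton_iff, h, not_true, and_false, if_false]
      norm_num
    · have h2 := h
      rw [Sym2.eq_iff] at h2
      rw [if_neg h2]
      simp only [SimpleGraph.adjMatrix_apply, hG', SimpleGraph.deleteEdges_adj,
        Set.mem_singleton_iff, h, not_false_iff, and_true, sub_zero]
  simp only [Matrix.sub_apply, alphaMatrix, Matrix.add_apply, Matrix.smul_apply,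
    Matrix.diagonal_apply, smul_eq_mul, hadj, hdeg, Matrix.single_apply_same]
  rw [Matrix.single, Matrix.single, Matrix.single, Matrix.single]
  simp only [Matrix.of_apply]
  clear hdeg hadjval hadj hG' huv
  split_ifs <;> first | ring1 | (exfalso; casesm* _ ∨ _, _ ∧ _ <;> subst_vars <;> simp_all)

lemma quad_mono {n : ℕ} (G G' : SimpleGraph (Fin n)) [DecidableRel G.Adj] [DecidableRel G'.Adj]
    (u v : Fin n) (huv : G.Adj u v) (hG' : G' = G.deleteEdges {s(u, v)}) (α : ℝ)
    (hα0 : 1 / 2 ≤ α) (hα1 : α < 1) (x : EuclideanSpace ℝ (Fin n)) :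
    ⟪x, Matrix.toEuclideanLin (alphaMatrix G' α) x⟫
      ≤ ⟪x, Matrix.toEuclideanLin (alphaMatrix G α) x⟫ := by
  have key : ⟪x, Matrix.toEuclideanLin (alphaMatrix G α) x⟫
      - ⟪x, Matrix.toEuclideanLin (alphaMatrix G' α) x⟫
      = x u * (α * x u) + x v * (α * x v) + x u * ((1 - α) * x v) + x v * ((1 - α) * x u) := by
    rw [← inner_sub_right]
    have h1 : Matrix.toEuclideanLin (alphaMatrix G α) x
        - Matrix.toEuclideanLin (alphaMatrix G' α) x
        = Matrix.toEuclideanLin (alphaMatrix G α - alphaMatrix G' α) x := by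
      rw [map_sub, LinearMap.sub_apply]
    rw [h1, diff_eq G G' u v huv hG' α, map_add, map_add, map_add,
      LinearMap.add_apply, LinearMap.add_apply, LinearMap.add_apply,
      inner_add_right, inner_add_right, inner_add_right,
      inner_stdBasis, inner_stdBasis, inner_stdBasis, inner_stdBasis]
  nlinarith [sq_nonneg (x u + x v), sq_nonneg (x u - x v), key]

theorem stmt_10 {n : ℕ} (hn : 3 ≤ n) (G G' : SimpleGraph (Fin n))
    [DecidableRel G.Adj] [DecidableRel G'.Adj]
    (hG : G.Connected) (e : Sym2 (Fin n)) (he : e ∈ G.edgeSet)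
    (hG' : G' = G.deleteEdges {e})
    (α : ℝ) (hα0 : 1 / 2 ≤ α) (hα1 : α < 1)
    (ρ ρ' : Fin n → ℝ) (hρa : Antitone ρ) (hρ'a : Antitone ρ')
    (hρ : ∃ σ : Equiv.Perm (Fin n), ρ = (alphaMatrix_isHermitian G α).eigenvalues ∘ σ)
    (hρ' : ∃ σ : Equiv.Perm (Fin n), ρ' = (alphaMatrix_isHermitian G' α).eigenvalues ∘ σ) :
    ∀ i : Fin n, ρ' i ≤ ρ i := by
  intro i
  obtain ⟨σ, hσ⟩ := hρ
  obtain ⟨σ', hσ'⟩ := hρ'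
  revert he hG'
  refine Sym2.ind (fun u v => ?_) e
  intro he hG'
  have huv : G.Adj u v := he
  set hA := alphaMatrix_isHermitian G α with hAdef
  set hA' := alphaMatrix_isHermitian G' α with hA'def
  -- the two families of eigenvectors
  set fV : {j : Fin n // j ≤ i} → Fin n := fun j => σ' j.1 with hfV
  set fW : {j : Fin n // i ≤ j} → Fin n := fun j => σ j.1 with hfW
  have hfVinj : Function.Injective fV := fun a b h => Subtype.ext (σ'.injective h)
  have hfWinj : Function.Injective fW := fun a b h => Subtype.ext (σ.injective h)
  set V : Submodule ℝ (EuclideanSpace ℝ (Fin n)) :=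
    Submodule.span ℝ (Set.range fun j => hA'.eigenvectorBasis (fV j)) with hV
  set W : Submodule ℝ (EuclideanSpace ℝ (Fin n)) :=
    Submodule.span ℝ (Set.range fun j => hA.eigenvectorBasis (fW j)) with hW
  have hVrank : Module.finrank ℝ V = (i : ℕ) + 1 := by
    have hcomp : (fun j => hA'.eigenvectorBasis (fV j)) = (⇑hA'.eigenvectorBasis ∘ fV) := rfl
    rw [hV, hcomp, finrank_span_eq_card
      ((hA'.eigenvectorBasis.orthonormal.comp fV hfVinj).linearIndependent)]
    rw [Fintype.card_subtype]
    have : Finset.univ.filter (fun j : Fin n => j ≤ i) = Finset.Iic i := by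
      ext j; simp
    rw [this, Fin.card_Iic]
  have hWrank : Module.finrank ℝ W = n - (i : ℕ) := by
    have hcomp : (fun j => hA.eigenvectorBasis (fW j)) = (⇑hA.eigenvectorBasis ∘ fW) := rfl
    rw [hW, hcomp, finrank_span_eq_card
      ((hA.eigenvectorBasis.orthonormal.comp fW hfWinj).linearIndependent)]
    rw [Fintype.card_subtype]
    have : Finset.univ.filter (fun j : Fin n => i ≤ j) = Finset.Ici i := by
      ext j; simp
    rw [this, Fin.card_Ici]
  have hdim : Module.finrank ℝ (EuclideanSpace ℝ (Fin n)) = n := by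
    simp [finrank_euclideanSpace]
  have hne_bot : V ⊓ W ≠ ⊥ := by
    intro hbot
    have h1 := Submodule.finrank_sup_add_finrank_inf_eq V W
    rw [hbot, finrank_bot, add_zero, hVrank, hWrank] at h1
    have h2 : Module.finrank ℝ ↥(V ⊔ W) ≤ n := by
      have := Submodule.finrank_le (V ⊔ W)
      rwa [hdim] at this
    have h3 : (i : ℕ) < n := i.isLt
    omega
  obtain ⟨x, hxmem, hx0⟩ := Submodule.exists_mem_ne_zero_of_ne_bot hne_bot
  have hxV : x ∈ V := hxmem.1
  have hxW : x ∈ W := hxmem.2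
  obtain ⟨c, hc⟩ := (Submodule.mem_span_range_iff_exists_fun ℝ).mp hxV
  obtain ⟨d, hd⟩ := (Submodule.mem_span_range_iff_exists_fun ℝ).mp hxW
  have hpos : (0:ℝ) < ⟪x, x⟫ := by
    have h1 : ⟪x, x⟫ = ‖x‖ ^ 2 := real_inner_self_eq_norm_sq x
    rw [h1]
    exact pow_pos (norm_pos_iff.mpr hx0) 2
  have hlow : ρ' i * ⟪x, x⟫ ≤ ⟪x, Matrix.toEuclideanLin (alphaMatrix G' α) x⟫ := by
    rw [← hc]
    apply quad_ge (alphaMatrix G' α) hA' fV hfVinj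
    intro j
    have h1 : hA'.eigenvalues (fV j) = ρ' j.1 := by rw [hσ']; rfl
    rw [h1]
    exact hρ'a j.2
  have hhigh : ⟪x, Matrix.toEuclideanLin (alphaMatrix G α) x⟫ ≤ ρ i * ⟪x, x⟫ := by
    rw [← hd]
    apply quad_le (alphaMatrix G α) hA fW hfWinj
    intro j
    have h1 : hA.eigenvalues (fW j) = ρ j.1 := by rw [hσ]; rfl
    rw [h1]
    exact hρa j.2
  have hmid := quad_mono G G' u v huv hG' α hα0 hα1 x
  have : ρ' i * ⟪x, x⟫ ≤ ρ i * ⟪x, x⟫ := le_trans hlow (le_trans hmid hhigh)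
  exact le_of_mul_le_mul_right this hpos
end
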